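/- Progress for type constructors: every well-kinded type constructor C is either in normal form (where normal forms are base constructors, type variables, lambdas with normal bodies, List/Record/Trace of normal forms, applications and Typerecs stuck on a neutral constructor headed by a type variable, and rows built from normal constructors possibly ending in a row variable or Rmap applied to a neutral row) or there exists C' such that C reduces in one step to C'. -/

import Mathlib

inductive Kind where
  | type | row
  | arrow : Kind → Kind → Kind
deriving DecidableEq

/- Type constructors and row constructors, de Bruijn indices for type/row variables.
   `rapp` applies a constructor of arrow-from-Row kind to a row. -/
mutual
inductive Cn where
  | bool | int | str
  | var : Nat → Cn
  | lam : Kind → Cn → Cn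
  | app : Cn → Cn → Cn
  | rapp : Cn → CRow → Cn
  | list : Cn → Cn
  | record : CRow → Cn
  | trace : Cn → Cn
  | typerec : Cn → Cn → Cn → Cn → Cn → Cn → Cn → Cn
inductive CRow where
  | nil
  | cons : String → Cn → CRow → CRow
  | rvar : Nat → CRow
  | rmap : Cn → CRow → CRow
end

mutual
def renC (f : Nat → Nat) : Cn → Cn
  | .bool => .bool
  | .int => .int
  | .str => .str
  | .var i => .var (f i)
  | .lam K C => .lam K (renC (fun n => match n with | 0 => 0 | n + 1 => f n + 1) C)
  | .app C D => .app (renC f C) (renC f D)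
  | .rapp C S => .rapp (renC f C) (renR f S)
  | .list C => .list (renC f C)
  | .record S => .record (renR f S)
  | .trace C => .trace (renC f C)
  | .typerec C cb ci cs cl cr ct =>
      .typerec (renC f C) (renC f cb) (renC f ci) (renC f cs) (renC f cl) (renC f cr) (renC f ct)
def renR (f : Nat → Nat) : CRow → CRow
  | .nil => .nil
  | .cons l C S => .cons l (renC f C) (renR f S)
  | .rvar i => .rvar (f i)
  | .rmap C S => .rmap (renC f C) (renR f S)
end

def shiftC : Cn → Cn := renC Nat.succ
def shiftR : CRow → CRow := renR Nat.succ

/- Parallel substitution: σ gives constructors for type variables,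
   τ gives rows for row variables (both share one de Bruijn context). -/
def extsC (σ : Nat → Cn) : Nat → Cn
  | 0 => .var 0
  | n + 1 => shiftC (σ n)

def extsR (τ : Nat → CRow) : Nat → CRow
  | 0 => .rvar 0
  | n + 1 => shiftR (τ n)

mutual
def subC (σ : Nat → Cn) (τ : Nat → CRow) : Cn → Cn
  | .bool => .bool
  | .int => .int
  | .str => .str
  | .var i => σ i
  | .lam K C => .lam K (subC (extsC σ) (extsR τ) C)
  | .app C D => .app (subC σ τ C) (subC σ τ D)
  | .rapp C S => .rapp (subC σ τ C) (subR σ τ S)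
  | .list C => .list (subC σ τ C)
  | .record S => .record (subR σ τ S)
  | .trace C => .trace (subC σ τ C)
  | .typerec C cb ci cs cl cr ct =>
      .typerec (subC σ τ C) (subC σ τ cb) (subC σ τ ci) (subC σ τ cs)
        (subC σ τ cl) (subC σ τ cr) (subC σ τ ct)
def subR (σ : Nat → Cn) (τ : Nat → CRow) : CRow → CRow
  | .nil => .nil
  | .cons l C S => .cons l (subC σ τ C) (subR σ τ S)
  | .rvar i => τ i
  | .rmap C S => .rmap (subC σ τ C) (subR σ τ S)
end

/- Single substitution of a constructor D for variable 0: C[α := D]. -/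
def subC1 (D : Cn) (C : Cn) : Cn :=
  subC (fun n => match n with | 0 => D | n + 1 => .var n)
       (fun n => match n with | 0 => .rvar 0 | n + 1 => .rvar n) C

/- Single substitution of a row S for variable 0. -/
def subCRow1 (S : CRow) (C : Cn) : Cn :=
  subC (fun n => match n with | 0 => .var 0 | n + 1 => .var n)
       (fun n => match n with | 0 => S | n + 1 => .rvar n) C

/- Kinding of constructors and row constructors. -/
mutual
inductive CKind : List Kind → Cn → Kind → Prop
  | bool {Γ} : CKind Γ .bool .type
  | int {Γ} : CKind Γ .int .type
  | str {Γ} : CKind Γ .str .type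
  | var {Γ i K} : Γ[i]? = some K → K ≠ .row → CKind Γ (.var i) K
  | lam {Γ K1 K2 C} : CKind (K1 :: Γ) C K2 → CKind Γ (.lam K1 C) (.arrow K1 K2)
  | app {Γ C D K1 K2} : CKind Γ C (.arrow K1 K2) → CKind Γ D K1 →
      CKind Γ (.app C D) K2
  | rapp {Γ C S K} : CKind Γ C (.arrow .row K) → RKind Γ S →
      CKind Γ (.rapp C S) K
  | list {Γ C} : CKind Γ C .type → CKind Γ (.list C) .type
  | record {Γ S} : RKind Γ S → CKind Γ (.record S) .type
  | trace {Γ C} : CKind Γ C .type → CKind Γ (.trace C) .type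
  | typerec {Γ C cb ci cs cl cr ct K} :
      CKind Γ C .type →
      CKind Γ cb K → CKind Γ ci K → CKind Γ cs K →
      CKind Γ cl (.arrow .type (.arrow K K)) →
      CKind Γ cr (.arrow .row (.arrow .row K)) →
      CKind Γ ct (.arrow .type (.arrow K K)) →
      CKind Γ (.typerec C cb ci cs cl cr ct) K
inductive RKind : List Kind → CRow → Prop
  | nil {Γ} : RKind Γ .nil
  | cons {Γ l C S} : CKind Γ C .type → RKind Γ S → RKind Γ (.cons l C S)
  | rvar {Γ i} : Γ[i]? = some .row → RKind Γ (.rvar i)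
  | rmap {Γ C S} : CKind Γ C (.arrow .type .type) → RKind Γ S →
      RKind Γ (.rmap C S)
end

/- Type-level reduction on constructors and rows: beta rules for application,
   Rmap unrolling, Typerec beta rules, plus full congruence rules. -/
mutual
inductive CStep : Cn → Cn → Prop
  | beta {K C D} : CStep (.app (.lam K C) D) (subC1 D C)
  | rbeta {K C S} : CStep (.rapp (.lam K C) S) (subCRow1 S C)
  | trBool {cb ci cs cl cr ct} : CStep (.typerec .bool cb ci cs cl cr ct) cb
  | trInt {cb ci cs cl cr ct} : CStep (.typerec .int cb ci cs cl cr ct) ci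
  | trStr {cb ci cs cl cr ct} : CStep (.typerec .str cb ci cs cl cr ct) cs
  | trList {D cb ci cs cl cr ct} :
      CStep (.typerec (.list D) cb ci cs cl cr ct)
        (.app (.app cl D) (.typerec D cb ci cs cl cr ct))
  | trRecord {S cb ci cs cl cr ct} :
      CStep (.typerec (.record S) cb ci cs cl cr ct)
        (.rapp (.rapp cr S)
          (.rmap (.lam .type
            (.typerec (.var 0) (shiftC cb) (shiftC ci) (shiftC cs)
              (shiftC cl) (shiftC cr) (shiftC ct))) S))
  | trTrace {D cb ci cs cl cr ct} :
      CStep (.typerec (.trace D) cb ci cs cl cr ct)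
        (.app (.app ct D) (.typerec D cb ci cs cl cr ct))
  -- congruences
  | lam {K C C'} : CStep C C' → CStep (.lam K C) (.lam K C')
  | app₁ {C C' D} : CStep C C' → CStep (.app C D) (.app C' D)
  | app₂ {C D D'} : CStep D D' → CStep (.app C D) (.app C D')
  | rapp₁ {C C' S} : CStep C C' → CStep (.rapp C S) (.rapp C' S)
  | rapp₂ {C S S'} : RStep S S' → CStep (.rapp C S) (.rapp C S')
  | list {C C'} : CStep C C' → CStep (.list C) (.list C')
  | record {S S'} : RStep S S' → CStep (.record S) (.record S')
  | trace {C C'} : CStep C C' → CStep (.trace C) (.trace C')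
  | typerec₀ {C C' cb ci cs cl cr ct} : CStep C C' →
      CStep (.typerec C cb ci cs cl cr ct) (.typerec C' cb ci cs cl cr ct)
  | typerecB {C cb cb' ci cs cl cr ct} : CStep cb cb' →
      CStep (.typerec C cb ci cs cl cr ct) (.typerec C cb' ci cs cl cr ct)
  | typerecI {C cb ci ci' cs cl cr ct} : CStep ci ci' →
      CStep (.typerec C cb ci cs cl cr ct) (.typerec C cb ci' cs cl cr ct)
  | typerecS {C cb ci cs cs' cl cr ct} : CStep cs cs' →
      CStep (.typerec C cb ci cs cl cr ct) (.typerec C cb ci cs' cl cr ct)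
  | typerecL {C cb ci cs cl cl' cr ct} : CStep cl cl' →
      CStep (.typerec C cb ci cs cl cr ct) (.typerec C cb ci cs cl' cr ct)
  | typerecR {C cb ci cs cl cr cr' ct} : CStep cr cr' →
      CStep (.typerec C cb ci cs cl cr ct) (.typerec C cb ci cs cl cr' ct)
  | typerecT {C cb ci cs cl cr ct ct'} : CStep ct ct' →
      CStep (.typerec C cb ci cs cl cr ct) (.typerec C cb ci cs cl cr ct')
inductive RStep : CRow → CRow → Prop
  | rmapNil {C} : RStep (.rmap C .nil) .nil
  | rmapCons {C l D S} :
      RStep (.rmap C (.cons l D S)) (.cons l (.app C D) (.rmap C S))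
  | cons₁ {l C C' S} : CStep C C' → RStep (.cons l C S) (.cons l C' S)
  | cons₂ {l C S S'} : RStep S S' → RStep (.cons l C S) (.cons l C S')
  | rmap₁ {C C' S} : CStep C C' → RStep (.rmap C S) (.rmap C' S)
  | rmap₂ {C S S'} : RStep S S' → RStep (.rmap C S) (.rmap C S')
end

/- Normal and neutral constructors and rows. -/
mutual
inductive NeCn : Cn → Prop
  | var {i} : NeCn (.var i)
  | app {E C} : NeCn E → NCn C → NeCn (.app E C)
  | rapp {E S} : NeCn E → NRow S → NeCn (.rapp E S)
  | typerec {E cb ci cs cl cr ct} : NeCn E →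
      NCn cb → NCn ci → NCn cs → NCn cl → NCn cr → NCn ct →
      NeCn (.typerec E cb ci cs cl cr ct)
inductive NCn : Cn → Prop
  | ne {E} : NeCn E → NCn E
  | bool : NCn .bool
  | int : NCn .int
  | str : NCn .str
  | lam {K C} : NCn C → NCn (.lam K C)
  | list {C} : NCn C → NCn (.list C)
  | record {S} : NRow S → NCn (.record S)
  | trace {C} : NCn C → NCn (.trace C)
inductive NRow : CRow → Prop
  | nil : NRow .nil
  | cons {l C S} : NCn C → NRow S → NRow (.cons l C S)
  | ne {U} : NeRow U → NRow U
inductive NeRow : CRow → Prop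
  | rvar {i} : NeRow (.rvar i)
  | cons {l C U} : NCn C → NeRow U → NeRow (.cons l C U)
  | rmap {C U} : NCn C → NeRow U → NeRow (.rmap C U)
end


lemma ncn_arrow_shape {Γ : List Kind} {C : Cn} {K1 K2 : Kind}
    (hn : NCn C) (hk : CKind Γ C (.arrow K1 K2)) :
    NeCn C ∨ ∃ K B, C = .lam K B := by
  cases hn with
  | ne h => exact .inl h
  | lam _ => exact .inr ⟨_, _, rfl⟩
  | bool => cases hk
  | int => cases hk
  | str => cases hk
  | list _ => cases hk
  | record _ => cases hk
  | trace _ => cases hk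

lemma ncn_type_shape {Γ : List Kind} {C : Cn}
    (hn : NCn C) (hk : CKind Γ C .type) :
    NeCn C ∨ C = .bool ∨ C = .int ∨ C = .str ∨ (∃ D, C = .list D) ∨
      (∃ S, C = .record S) ∨ (∃ D, C = .trace D) := by
  cases hn with
  | ne h => exact .inl h
  | lam _ => cases hk
  | bool => exact .inr (.inl rfl)
  | int => exact .inr (.inr (.inl rfl))
  | str => exact .inr (.inr (.inr (.inl rfl)))
  | list _ => exact .inr (.inr (.inr (.inr (.inl ⟨_, rfl⟩))))
  | record _ => exact .inr (.inr (.inr (.inr (.inr (.inl ⟨_, rfl⟩)))))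
  | trace _ => exact .inr (.inr (.inr (.inr (.inr (.inr ⟨_, rfl⟩)))))

mutual
theorem prog_c : ∀ {Γ : List Kind} {C : Cn} {K : Kind},
    CKind Γ C K → NCn C ∨ ∃ C', CStep C C'
  | _, _, _, .bool => .inl .bool
  | _, _, _, .int => .inl .int
  | _, _, _, .str => .inl .str
  | _, _, _, .var _ _ => .inl (.ne .var)
  | _, _, _, .lam h =>
    match prog_c h with
    | .inl hn => .inl (.lam hn)
    | .inr ⟨_, hs⟩ => .inr ⟨_, .lam hs⟩
  | _, _, _, .app hC hD =>
    match prog_c hC with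
    | .inr ⟨_, hs⟩ => .inr ⟨_, .app₁ hs⟩
    | .inl hnC =>
      match prog_c hD with
      | .inr ⟨_, hs⟩ => .inr ⟨_, .app₂ hs⟩
      | .inl hnD =>
        match ncn_arrow_shape hnC hC with
        | .inl hne => .inl (.ne (.app hne hnD))
        | .inr ⟨_, _, heq⟩ => heq ▸ .inr ⟨_, .beta⟩
  | _, _, _, .rapp hC hS =>
    match prog_c hC with
    | .inr ⟨_, hs⟩ => .inr ⟨_, .rapp₁ hs⟩
    | .inl hnC =>
      match prog_r hS with
      | .inr ⟨_, hs⟩ => .inr ⟨_, .rapp₂ hs⟩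
      | .inl hnS =>
        match ncn_arrow_shape hnC hC with
        | .inl hne => .inl (.ne (.rapp hne hnS))
        | .inr ⟨_, _, heq⟩ => heq ▸ .inr ⟨_, .rbeta⟩
  | _, _, _, .list h =>
    match prog_c h with
    | .inl hn => .inl (.list hn)
    | .inr ⟨_, hs⟩ => .inr ⟨_, .list hs⟩
  | _, _, _, .record h =>
    match prog_r h with
    | .inl hn => .inl (.record hn)
    | .inr ⟨_, hs⟩ => .inr ⟨_, .record hs⟩
  | _, _, _, .trace h =>
    match prog_c h with
    | .inl hn => .inl (.trace hn)
    | .inr ⟨_, hs⟩ => .inr ⟨_, .trace hs⟩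
  | _, _, _, .typerec h0 hb hi hs hl hr ht =>
    match prog_c h0 with
    | .inr ⟨_, hstep⟩ => .inr ⟨_, .typerec₀ hstep⟩
    | .inl hn0 =>
      match ncn_type_shape hn0 h0 with
      | .inr (.inl heq) => heq ▸ .inr ⟨_, .trBool⟩
      | .inr (.inr (.inl heq)) => heq ▸ .inr ⟨_, .trInt⟩
      | .inr (.inr (.inr (.inl heq))) => heq ▸ .inr ⟨_, .trStr⟩
      | .inr (.inr (.inr (.inr (.inl ⟨_, heq⟩)))) => heq ▸ .inr ⟨_, .trList⟩
      | .inr (.inr (.inr (.inr (.inr (.inl ⟨_, heq⟩))))) =>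
          heq ▸ .inr ⟨_, .trRecord⟩
      | .inr (.inr (.inr (.inr (.inr (.inr ⟨_, heq⟩))))) =>
          heq ▸ .inr ⟨_, .trTrace⟩
      | .inl hne =>
        match prog_c hb with
        | .inr ⟨_, hstep⟩ => .inr ⟨_, .typerecB hstep⟩
        | .inl hnb =>
          match prog_c hi with
          | .inr ⟨_, hstep⟩ => .inr ⟨_, .typerecI hstep⟩
          | .inl hni =>
            match prog_c hs with
            | .inr ⟨_, hstep⟩ => .inr ⟨_, .typerecS hstep⟩
            | .inl hns =>
              match prog_c hl with
              | .inr ⟨_, hstep⟩ => .inr ⟨_, .typerecL hstep⟩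
              | .inl hnl =>
                match prog_c hr with
                | .inr ⟨_, hstep⟩ => .inr ⟨_, .typerecR hstep⟩
                | .inl hnr =>
                  match prog_c ht with
                  | .inr ⟨_, hstep⟩ => .inr ⟨_, .typerecT hstep⟩
                  | .inl hnt =>
                      .inl (.ne (.typerec hne hnb hni hns hnl hnr hnt))
theorem prog_r : ∀ {Γ : List Kind} {S : CRow},
    RKind Γ S → NRow S ∨ ∃ S', RStep S S'
  | _, _, .nil => .inl .nil
  | _, _, .cons hC hS =>
    match prog_c hC with
    | .inr ⟨_, hs⟩ => .inr ⟨_, .cons₁ hs⟩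
    | .inl hnC =>
      match prog_r hS with
      | .inr ⟨_, hs⟩ => .inr ⟨_, .cons₂ hs⟩
      | .inl hnS => .inl (.cons hnC hnS)
  | _, _, .rvar _ => .inl (.ne .rvar)
  | _, _, .rmap hC hS =>
    match prog_c hC with
    | .inr ⟨_, hs⟩ => .inr ⟨_, .rmap₁ hs⟩
    | .inl hnC =>
      match prog_r hS with
      | .inr ⟨_, hs⟩ => .inr ⟨_, .rmap₂ hs⟩
      | .inl hnS =>
        match hnS with
        | .nil => .inr ⟨_, .rmapNil⟩
        | .cons _ _ => .inr ⟨_, .rmapCons⟩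
        | .ne hneS => .inl (.ne (.rmap hnC hneS))
end

/- Progress for type constructors: every well-kinded constructor is in normal form
   or takes a reduction step. -/
theorem constructor_progress {Γ : List Kind} {C : Cn} {K : Kind}
    (hk : CKind Γ C K) : NCn C ∨ ∃ C', CStep C C' := by
  exact prog_c hk
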